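/- For 0 < p < 1, the function g_p(x) = 2x - 1 + (1-x)^{p+1} - x^{p+1} is strictly convex on [1/2, 1], with g_p(1/2) = g_p(1) = 0; consequently g_p(x) < 0 for 1/2 < x < 1. -/

import Mathlib

open Real

theorem g_strictConvex (p : ℝ) (hp0 : 0 < p) (hp1 : p < 1) :
    StrictConvexOn ℝ (Set.Icc (1/2 : ℝ) 1)
      (fun x : ℝ => 2 * x - 1 + (1 - x) ^ (p + 1) - x ^ (p + 1)) ∧
    (2 * (1/2 : ℝ) - 1 + (1 - 1/2 : ℝ) ^ (p + 1) - (1/2 : ℝ) ^ (p + 1) = 0) ∧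
    (2 * (1 : ℝ) - 1 + (1 - 1 : ℝ) ^ (p + 1) - (1 : ℝ) ^ (p + 1) = 0) ∧
    ∀ x : ℝ, 1/2 < x → x < 1 →
      2 * x - 1 + (1 - x) ^ (p + 1) - x ^ (p + 1) < 0 := by
  have hp1' : (1:ℝ) ≤ p + 1 := by linarith
  set f : ℝ → ℝ := fun x => 2 * x - 1 + (1 - x) ^ (p + 1) - x ^ (p + 1) with hf
  set f' : ℝ → ℝ := fun x => 2 + (p + 1) * (1 - x) ^ p * (-1) - (p + 1) * x ^ p with hf'
  have hderiv : ∀ x : ℝ, HasDerivAt f (f' x) x := by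
    intro x
    have h1 : HasDerivAt (fun x : ℝ => x ^ (p + 1)) ((p + 1) * x ^ p) x := by
      have := Real.hasDerivAt_rpow_const (x := x) (p := p + 1) (Or.inr hp1')
      simpa using this
    have hu : HasDerivAt (fun x : ℝ => 1 - x) (-1) x := by
      exact (hasDerivAt_id' x).const_sub 1
    have h2 : HasDerivAt (fun x : ℝ => (1 - x) ^ (p + 1))
        ((p + 1) * (1 - x) ^ p * (-1)) x := by
      have := (Real.hasDerivAt_rpow_const (x := 1 - x) (p := p + 1) (Or.inr hp1')).comp x hu
      simpa [Function.comp_def] using this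
    have h0 : HasDerivAt (fun x : ℝ => 2 * x - 1) 2 x := by
      simpa using ((hasDerivAt_id x).const_mul 2).sub_const 1
    exact (h0.add h2).sub h1
  have hderivf : deriv f = f' := funext fun x => (hderiv x).deriv
  -- second derivative positive on interior
  have hconv : StrictConvexOn ℝ (Set.Icc (1/2 : ℝ) 1) f := by
    apply strictConvexOn_of_deriv2_pos (convex_Icc _ _)
    · exact fun x _ => ((hderiv x).differentiableAt).continuousAt.continuousWithinAt
    · intro x hx
      rw [interior_Icc] at hx
      obtain ⟨hx1, hx2⟩ := hx
      have hx0 : (0:ℝ) < x := by linarith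
      have hx0' : (0:ℝ) < 1 - x := by linarith
      have h3 : HasDerivAt (fun x : ℝ => x ^ p) (p * x ^ (p - 1)) x :=
        Real.hasDerivAt_rpow_const (Or.inl (ne_of_gt hx0))
      have hu : HasDerivAt (fun x : ℝ => 1 - x) (-1) x := by
        exact (hasDerivAt_id' x).const_sub 1
      have h4 : HasDerivAt (fun x : ℝ => (1 - x) ^ p) (p * (1 - x) ^ (p - 1) * (-1)) x := by
        have := (Real.hasDerivAt_rpow_const (x := 1 - x) (p := p) (Or.inl (ne_of_gt hx0'))).comp x hu
        simpa [Function.comp_def] using this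
      have h5 : HasDerivAt f'
          (0 + (p + 1) * (p * (1 - x) ^ (p - 1) * (-1)) * (-1) - (p + 1) * (p * x ^ (p - 1))) x := by
        have hA : HasDerivAt (fun x : ℝ => (p + 1) * (1 - x) ^ p * (-1))
            ((p + 1) * (p * (1 - x) ^ (p - 1) * (-1)) * (-1)) x := by
          exact (h4.const_mul (p + 1)).mul_const (-1)
        have hB : HasDerivAt (fun x : ℝ => (p + 1) * x ^ p) ((p + 1) * (p * x ^ (p - 1))) x :=
          h3.const_mul (p + 1)
        exact ((hasDerivAt_const x (2:ℝ)).add hA).sub hB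
      have hd2 : deriv (deriv f) x =
          (p + 1) * p * ((1 - x) ^ (p - 1) - x ^ (p - 1)) := by
        rw [hderivf, h5.deriv]; ring
      have hlt : x ^ (p - 1) < (1 - x) ^ (p - 1) :=
        Real.rpow_lt_rpow_of_neg hx0' (by linarith) (by linarith)
      have : 0 < deriv (deriv f) x := by
        rw [hd2]
        have : 0 < (1 - x) ^ (p - 1) - x ^ (p - 1) := by linarith
        positivity
      simpa [Function.iterate_succ, Function.comp] using this
  have hhalf : f (1/2) = 0 := by
    show 2 * (1/2 : ℝ) - 1 + (1 - 1/2 : ℝ) ^ (p + 1) - (1/2 : ℝ) ^ (p + 1) = 0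
    norm_num
  have hone : f 1 = 0 := by
    show 2 * (1 : ℝ) - 1 + (1 - 1 : ℝ) ^ (p + 1) - (1 : ℝ) ^ (p + 1) = 0
    rw [sub_self, Real.zero_rpow (by linarith), Real.one_rpow]
    ring
  refine ⟨hconv, hhalf, hone, ?_⟩
  intro x hx1 hx2
  have key := hconv.2 (show (1/2:ℝ) ∈ Set.Icc (1/2:ℝ) 1 by constructor <;> norm_num)
    (show (1:ℝ) ∈ Set.Icc (1/2:ℝ) 1 by constructor <;> norm_num) (by norm_num)
    (show (0:ℝ) < 2 - 2 * x by linarith) (show (0:ℝ) < 2 * x - 1 by linarith)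
    (show (2 - 2 * x) + (2 * x - 1) = 1 by ring)
  have hxeq : (2 - 2 * x) • (1/2 : ℝ) + (2 * x - 1) • (1 : ℝ) = x := by
    simp [smul_eq_mul]; ring
  rw [hxeq, hhalf, hone] at key
  simpa [hf] using key
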